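/- For every c ≥ 1, every i ≥ 1, every j ≥ 1, every n ≥ 1, and every m with 1 ≤ m ≤ (a_{i,j})^c: λ_3(n,m) ≤ (2i+2)·n + (3i−2)·c·j·(m−1). -/

import Mathlib

/-- Alternating list `a b a b ⋯` of the given length. -/
def altList : ℕ → ℕ → ℕ → List ℕ
  | 0, _, _ => []
  | (k+1), a, b => a :: altList k b a

/-- An order-`s` Davenport–Schinzel sequence: it contains no (not necessarily
contiguous) subsequence `a b a b ⋯` of length `s+2` over two distinct symbols. -/
def IsDS (s : ℕ) (S : List ℕ) : Prop :=
  ∀ a b : ℕ, a ≠ b → ¬ (altList (s + 2) a b).Sublist S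

/-- 2-sparse: no two equal adjacent symbols. -/
def Sparse2 (S : List ℕ) : Prop := S.Chain' (· ≠ ·)

/-- `S` can be partitioned into at most `m` blocks
(contiguous runs of pairwise distinct symbols). -/
def Blocked (m : ℕ) (S : List ℕ) : Prop :=
  ∃ Bs : List (List ℕ), Bs.length ≤ m ∧ (∀ B ∈ Bs, B.Nodup) ∧ S = Bs.flatten

/-- `λ_s(n)`: maximum length of a 2-sparse order-`s` DS sequence over an
alphabet of `n` symbols. -/
noncomputable def lamS (s n : ℕ) : ℕ :=
  sSup {l : ℕ | ∃ S : List ℕ, IsDS s S ∧ Sparse2 S ∧ S.toFinset.card ≤ n ∧ S.length = l}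

/-- `λ_s(n,m)`: maximum length of an order-`s` DS sequence over an alphabet of
`n` symbols that can be partitioned into at most `m` blocks. -/
noncomputable def lamB (s n m : ℕ) : ℕ :=
  sSup {l : ℕ | ∃ S : List ℕ, IsDS s S ∧ S.toFinset.card ≤ n ∧ Blocked m S ∧ S.length = l}

/-- Ackermann-type function `a_{i,j}` (junk values when an index is 0):
`a_{1,j} = 2^j`, `a_{i,1} = 2` for `i ≥ 2`, and `a_{i,j} = w·a_{i−1,w}` with
`w = a_{i,j−1}` for `i,j ≥ 2`. -/
def ackDS : ℕ → ℕ → ℕ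
  | 0, _ => 0
  | 1, j => 2 ^ j
  | _+2, 0 => 0
  | _+2, 1 => 2
  | i+2, j+2 => ackDS (i+2) (j+1) * ackDS (i+1) (ackDS (i+2) (j+1))
  termination_by i j => (i, j)

/-- Two-argument inverse Ackermann:
`α(n,m) = min{ i ≥ 1 : a_{i,j} ≥ m, where j = max(⌈n/m⌉, 3) }`. -/
noncomputable def alphaDS (n m : ℕ) : ℕ :=
  sInf {i : ℕ | 1 ≤ i ∧ m ≤ ackDS i (max ((n + m - 1) / m) 3)}

/-- One-argument inverse Ackermann `α(n) = α(n,n)`. -/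
noncomputable def alphaD (n : ℕ) : ℕ := alphaDS n n


open List

/-- order-3 DS property in raw form -/
def DS3 (S : List ℕ) : Prop := ∀ a b : ℕ, a ≠ b → ¬ ([a,b,a,b,a] <+ S)

def NodupBlocks (Bs : List (List ℕ)) : Prop := ∀ B ∈ Bs, B.Nodup

lemma ds3_sublist {S T : List ℕ} (h : DS3 S) (hsub : T <+ S) : DS3 T :=
  fun a b hab hT => h a b hab (hT.trans hsub)

lemma pair_sublist {a b : ℕ} : ∀ {l : List ℕ}, a ∈ l → b ∈ l → a ≠ b →
    [a,b] <+ l ∨ [b,a] <+ l := by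
  intro l
  induction l with
  | nil => simp
  | cons c l ih =>
    intro ha hb hab
    rcases eq_or_ne a c with rfl | hac
    · have hb' : b ∈ l := by
        rcases mem_cons.1 hb with rfl | h
        · exact absurd rfl hab
        · exact h
      exact Or.inl ((singleton_sublist.2 hb').cons₂ a)
    rcases eq_or_ne b c with rfl | hbc
    · have ha' : a ∈ l := by
        rcases mem_cons.1 ha with rfl | h
        · exact absurd rfl hac
        · exact h
      exact Or.inr ((singleton_sublist.2 ha').cons₂ b)
    · have ha' : a ∈ l := by
        rcases mem_cons.1 ha with rfl | h
        · exact absurd rfl hac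
        · exact h
      have hb' : b ∈ l := by
        rcases mem_cons.1 hb with rfl | h
        · exact absurd rfl hbc
        · exact h
      rcases ih ha' hb' hab with h | h
      · exact Or.inl (h.cons c)
      · exact Or.inr (h.cons c)

lemma length_filter_split (l : List ℕ) (p : ℕ → Bool) :
    l.length = (l.filter p).length + (l.filter (fun x => !p x)).length := by
  have := (List.filter_append_perm p l).length_eq
  simp at this
  omega

lemma nodup_length_eq_card {B : List ℕ} (h : B.Nodup) : B.length = B.toFinset.card := by
  rw [List.card_toFinset, h.dedup]

lemma l1_bound : ∀ (Bs : List (List ℕ)), NodupBlocks Bs →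
    (∀ a b : ℕ, a ≠ b → ¬([a,b,a] <+ Bs.flatten)) →
    Bs.flatten.length ≤ Bs.flatten.toFinset.card + Bs.length := by
  intro Bs
  induction Bs with
  | nil => simp
  | cons B Bs ih =>
    intro hnd h
    set R := Bs.flatten with hR
    have hflat : (B :: Bs).flatten = B ++ R := by simp [hR]
    rw [hflat] at h ⊢
    have hBnd : B.Nodup := hnd B mem_cons_self
    have hRle : R.length ≤ R.toFinset.card + Bs.length := by
      apply ih (fun B' hB' => hnd B' (mem_cons_of_mem _ hB'))
      intro a b hab hsub
      exact h a b hab (hsub.trans (sublist_append_right _ _))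
    -- intersection has at most one element
    have hint : (B.toFinset ∩ R.toFinset).card ≤ 1 := by
      apply Finset.card_le_one.2
      intro a ha b hb
      by_contra hab
      simp only [Finset.mem_inter, List.mem_toFinset] at ha hb
      rcases pair_sublist ha.1 hb.1 hab with hs | hs
      · exact h a b hab (hs.append (singleton_sublist.2 ha.2))
      · exact h b a (Ne.symm hab) (hs.append (singleton_sublist.2 hb.2))
    have hBcard : B.toFinset.card ≤ (B.toFinset \ R.toFinset).card + 1 := by
      have : B.toFinset.card = (B.toFinset \ R.toFinset).card + (B.toFinset ∩ R.toFinset).card :=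
        (Finset.card_sdiff_add_card_inter _ _).symm
      omega
    have hdisj : Disjoint (B.toFinset \ R.toFinset) R.toFinset := Finset.sdiff_disjoint
    have hunion : (B.toFinset \ R.toFinset).card + R.toFinset.card ≤ (B ++ R).toFinset.card := by
      rw [← Finset.card_union_of_disjoint hdisj]
      apply Finset.card_le_card
      rw [List.toFinset_append]
      intro x hx
      rcases Finset.mem_union.1 hx with hx | hx
      · exact Finset.mem_union_left _ (Finset.mem_sdiff.1 hx).1
      · exact Finset.mem_union_right _ hx
    have := nodup_length_eq_card hBnd
    rw [List.length_append, List.length_cons]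
    omega

lemma l2_aux : ∀ (Bs : List (List ℕ)) (C : List ℕ), NodupBlocks Bs →
    (∀ a b : ℕ, a ≠ b → ¬([a,b,a,b] <+ C ++ Bs.flatten)) →
    Bs.flatten.length ≤ (Bs.flatten.toFinset \ C.toFinset).card +
      Bs.flatten.toFinset.card + Bs.length := by
  intro Bs
  induction Bs with
  | nil => simp
  | cons B Bs ih =>
    intro C hnd h
    set R := Bs.flatten with hR
    have hflat : (B :: Bs).flatten = B ++ R := by simp [hR]
    rw [hflat] at h ⊢
    have hBnd : B.Nodup := hnd B mem_cons_self
    -- IH with context C ++ B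
    have hRle : R.length ≤ (R.toFinset \ (C ++ B).toFinset).card + R.toFinset.card + Bs.length := by
      apply ih (C ++ B) (fun B' hB' => hnd B' (mem_cons_of_mem _ hB'))
      intro a b hab hsub
      apply h a b hab
      rwa [List.append_assoc] at hsub
    -- at most one symbol of B is in both C and R
    have hint : (B.toFinset ∩ C.toFinset ∩ R.toFinset).card ≤ 1 := by
      apply Finset.card_le_one.2
      intro a ha b hb
      by_contra hab
      simp only [Finset.mem_inter, List.mem_toFinset] at ha hb
      rcases pair_sublist ha.1.1 hb.1.1 hab with hs | hs
      · -- [a,b] <+ B : pattern b(C) a b a(R) : [b,a,b,a]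
        refine h b a (Ne.symm hab) ?_
        have h2 : [b] ++ ([a,b] ++ [a]) <+ C ++ (B ++ R) :=
          Sublist.append (singleton_sublist.2 hb.1.2)
            (Sublist.append hs (singleton_sublist.2 ha.2))
        simpa using h2
      · refine h a b hab ?_
        have h2 : [a] ++ ([b,a] ++ [b]) <+ C ++ (B ++ R) :=
          Sublist.append (singleton_sublist.2 ha.1.2)
            (Sublist.append hs (singleton_sublist.2 hb.2))
        simpa using h2
    have hBsplit : B.toFinset.card ≤ (B.toFinset \ C.toFinset).card +
        ((B.toFinset ∩ C.toFinset) \ R.toFinset).card + 1 := by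
      have hsub : B.toFinset ⊆ (B.toFinset \ C.toFinset) ∪
          (((B.toFinset ∩ C.toFinset) \ R.toFinset) ∪ (B.toFinset ∩ C.toFinset ∩ R.toFinset)) := by
        intro x hx
        simp only [Finset.mem_union, Finset.mem_sdiff, Finset.mem_inter]
        by_cases hxC : x ∈ C.toFinset
        · by_cases hxR : x ∈ R.toFinset
          · exact Or.inr (Or.inr ⟨⟨hx, hxC⟩, hxR⟩)
          · exact Or.inr (Or.inl ⟨⟨hx, hxC⟩, hxR⟩)
        · exact Or.inl ⟨hx, hxC⟩
      calc B.toFinset.card ≤ _ := Finset.card_le_card hsub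
        _ ≤ _ := by
          refine (Finset.card_union_le _ _).trans ?_
          have := Finset.card_union_le ((B.toFinset ∩ C.toFinset) \ R.toFinset)
            (B.toFinset ∩ C.toFinset ∩ R.toFinset)
          omega
    -- combine disjoint pieces
    have hd1 : (B.toFinset \ C.toFinset).card + (R.toFinset \ (C ++ B).toFinset).card ≤
        ((B ++ R).toFinset \ C.toFinset).card := by
      rw [← Finset.card_union_of_disjoint]
      · apply Finset.card_le_card
        intro x hx
        simp only [Finset.mem_union, Finset.mem_sdiff, List.toFinset_append] at hx ⊢
        tauto
      · rw [Finset.disjoint_left]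
        intro x hx hx'
        simp only [Finset.mem_sdiff, List.toFinset_append, Finset.mem_union] at hx hx'
        tauto
    have hd2 : ((B.toFinset ∩ C.toFinset) \ R.toFinset).card + R.toFinset.card ≤
        (B ++ R).toFinset.card := by
      rw [← Finset.card_union_of_disjoint Finset.sdiff_disjoint]
      apply Finset.card_le_card
      intro x hx
      simp only [Finset.mem_union, Finset.mem_sdiff, Finset.mem_inter,
        List.toFinset_append] at hx ⊢
      rcases hx with ⟨⟨h1, _⟩, _⟩ | h1
      · exact Or.inl h1
      · exact Or.inr h1
    have hBlen := nodup_length_eq_card hBnd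
    rw [List.length_append, List.length_cons]
    omega

lemma l2_bound (Bs : List (List ℕ)) (hnd : NodupBlocks Bs)
    (h : ∀ a b : ℕ, a ≠ b → ¬([a,b,a,b] <+ Bs.flatten)) :
    Bs.flatten.length ≤ 2 * Bs.flatten.toFinset.card + Bs.length := by
  have h2 := l2_aux Bs [] hnd (by simpa using h)
  have h0 : (Bs.flatten.toFinset \ ([] : List ℕ).toFinset) = Bs.flatten.toFinset := by simp
  rw [h0] at h2
  omega

lemma two_blocks_bound (Bs : List (List ℕ)) (hnd : NodupBlocks Bs) (hlen : Bs.length ≤ 2) :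
    Bs.flatten.length ≤ 2 * Bs.flatten.toFinset.card := by
  match Bs, hlen with
  | [], _ => simp
  | [B], _ =>
    have := nodup_length_eq_card (hnd B (by simp))
    simp only [List.flatten_cons, List.flatten_nil, List.append_nil]
    omega
  | [B1, B2], _ =>
    have h1 := nodup_length_eq_card (hnd B1 (by simp))
    have h2 := nodup_length_eq_card (hnd B2 (by simp))
    have hflat : ([B1, B2] : List (List ℕ)).flatten = B1 ++ B2 := by simp
    rw [hflat, List.length_append]
    have c1 : B1.toFinset.card ≤ (B1 ++ B2).toFinset.card :=
      Finset.card_le_card (by rw [List.toFinset_append]; exact Finset.subset_union_left)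
    have c2 : B2.toFinset.card ≤ (B1 ++ B2).toFinset.card :=
      Finset.card_le_card (by rw [List.toFinset_append]; exact Finset.subset_union_right)
    omega

lemma flatten_map_filter (L : List (List ℕ)) (p : ℕ → Bool) :
    (L.map (List.filter p)).flatten = L.flatten.filter p := by
  induction L with
  | nil => simp
  | cons B L ih => simp only [List.map_cons, List.flatten_cons, List.filter_append, ih]

lemma nodupBlocks_map_filter {Bs : List (List ℕ)} (h : NodupBlocks Bs) (p : ℕ → Bool) :
    NodupBlocks (Bs.map (List.filter p)) := by
  intro B hB
  obtain ⟨B', hB', rfl⟩ := List.mem_map.1 hB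
  exact (h B' hB').filter p

lemma toFinset_filter_mem (l r : List ℕ) :
    (l.filter (fun x => decide (x ∈ r))).toFinset = l.toFinset ∩ r.toFinset := by
  ext x; simp [List.mem_filter]

lemma toFinset_filter_not_mem (l r : List ℕ) :
    (l.filter (fun x => !decide (x ∈ r))).toFinset = l.toFinset \ r.toFinset := by
  ext x; simp [List.mem_filter]

lemma mainA : ∀ t : ℕ, ∀ Bs : List (List ℕ), NodupBlocks Bs → DS3 Bs.flatten →
    Bs.length ≤ 2 ^ t →
    Bs.flatten.length ≤ 4 * Bs.flatten.toFinset.card + t * (Bs.length - 1) := by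
  intro t
  induction t with
  | zero =>
    intro Bs hnd _ hlen
    have := two_blocks_bound Bs hnd (by omega)
    omega
  | succ t ih =>
    intro Bs hnd hds hlen
    rcases Nat.eq_zero_or_pos t with rfl | ht
    · -- t+1 = 1 : at most 2 blocks
      have hlen2 : Bs.length ≤ 2 := by norm_num at hlen; exact hlen
      have := two_blocks_bound Bs hnd hlen2
      omega
    by_cases hsmall : Bs.length ≤ 2 ^ t
    · have := ih Bs hnd hds hsmall
      have hmono : t * (Bs.length - 1) ≤ (t+1) * (Bs.length - 1) := by
        apply Nat.mul_le_mul_right; omega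
      omega
    push_neg at hsmall
    -- split into two halves
    set Bs1 := Bs.take (2 ^ t) with hBs1
    set Bs2 := Bs.drop (2 ^ t) with hBs2
    have hm1 : Bs1.length = 2 ^ t := by
      rw [hBs1, List.length_take]; omega
    have hm2 : Bs2.length = Bs.length - 2 ^ t := by
      rw [hBs2, List.length_drop]
    have happ : Bs1 ++ Bs2 = Bs := List.take_append_drop _ _
    set f1 := Bs1.flatten with hf1
    set f2 := Bs2.flatten with hf2
    have hflat : Bs.flatten = f1 ++ f2 := by
      rw [← happ, List.flatten_append]
    have hnd1 : NodupBlocks Bs1 := fun B hB => hnd B (by rw [← happ]; exact List.mem_append_left _ hB)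
    have hnd2 : NodupBlocks Bs2 := fun B hB => hnd B (by rw [← happ]; exact List.mem_append_right _ hB)
    rw [hflat] at hds ⊢
    -- side 1
    set p1 : ℕ → Bool := fun x => decide (x ∈ f2) with hp1
    have hsplit1 : f1.length = (f1.filter p1).length + (f1.filter (fun x => !p1 x)).length :=
      length_filter_split f1 p1
    have hloc1 : (f1.filter (fun x => !p1 x)).length ≤
        4 * (f1.filter (fun x => !p1 x)).toFinset.card + t * (Bs1.length - 1) := by
      have h1 := ih (Bs1.map (List.filter (fun x => !p1 x)))
        (nodupBlocks_map_filter hnd1 _)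
        (by
          rw [flatten_map_filter, ← hf1]
          exact ds3_sublist hds ((List.filter_sublist).trans (List.sublist_append_left _ _)))
        (by rw [List.length_map]; omega)
      rw [flatten_map_filter, List.length_map, ← hf1] at h1
      exact h1
    have hst1 : (f1.filter p1).length ≤ 2 * (f1.filter p1).toFinset.card + Bs1.length := by
      have h1 := l2_bound (Bs1.map (List.filter p1)) (nodupBlocks_map_filter hnd1 _) ?_
      · rw [flatten_map_filter, List.length_map, ← hf1] at h1
        exact h1
      rw [flatten_map_filter, ← hf1]
      intro a b hab hsub
      have haf2 : a ∈ f2 := by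
        have ha : a ∈ f1.filter p1 := hsub.subset (by simp)
        have := List.mem_filter.1 ha
        simpa [hp1] using this.2
      refine hds a b hab ?_
      have h2 : [a,b,a,b] ++ [a] <+ f1 ++ f2 :=
        Sublist.append (hsub.trans (f1.filter_sublist)) (singleton_sublist.2 haf2)
      simpa using h2
    -- side 2
    set p2 : ℕ → Bool := fun x => decide (x ∈ f1) with hp2
    have hsplit2 : f2.length = (f2.filter p2).length + (f2.filter (fun x => !p2 x)).length :=
      length_filter_split f2 p2
    have hloc2 : (f2.filter (fun x => !p2 x)).length ≤
        4 * (f2.filter (fun x => !p2 x)).toFinset.card + t * (Bs2.length - 1) := by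
      have h1 := ih (Bs2.map (List.filter (fun x => !p2 x)))
        (nodupBlocks_map_filter hnd2 _)
        (by
          rw [flatten_map_filter, ← hf2]
          exact ds3_sublist hds ((List.filter_sublist).trans (List.sublist_append_right _ _)))
        (by rw [List.length_map]; omega)
      rw [flatten_map_filter, List.length_map, ← hf2] at h1
      exact h1
    have hen2 : (f2.filter p2).length ≤ 2 * (f2.filter p2).toFinset.card + Bs2.length := by
      have h1 := l2_bound (Bs2.map (List.filter p2)) (nodupBlocks_map_filter hnd2 _) ?_
      · rw [flatten_map_filter, List.length_map, ← hf2] at h1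
        exact h1
      rw [flatten_map_filter, ← hf2]
      intro a b hab hsub
      have hbf1 : b ∈ f1 := by
        have hb : b ∈ f2.filter p2 := hsub.subset (by simp)
        have := List.mem_filter.1 hb
        simpa [hp2] using this.2
      refine hds b a (Ne.symm hab) ?_
      have h2 : [b] ++ [a,b,a,b] <+ f1 ++ f2 :=
        Sublist.append (singleton_sublist.2 hbf1) (hsub.trans (f2.filter_sublist))
      simpa using h2
    -- cards
    have hc1 : (f1.filter (fun x => !p1 x)).toFinset = f1.toFinset \ f2.toFinset :=
      toFinset_filter_not_mem f1 f2
    have hc2 : (f1.filter p1).toFinset = f1.toFinset ∩ f2.toFinset :=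
      toFinset_filter_mem f1 f2
    have hc3 : (f2.filter (fun x => !p2 x)).toFinset = f2.toFinset \ f1.toFinset :=
      toFinset_filter_not_mem f2 f1
    have hc4 : (f2.filter p2).toFinset = f2.toFinset ∩ f1.toFinset :=
      toFinset_filter_mem f2 f1
    have hcard1 : (f1.toFinset \ f2.toFinset).card + (f1.toFinset ∩ f2.toFinset).card
        = f1.toFinset.card := Finset.card_sdiff_add_card_inter _ _
    have hcard2 : (f2.toFinset \ f1.toFinset).card + f1.toFinset.card =
        (f2.toFinset ∪ f1.toFinset).card := Finset.card_sdiff_add_card _ _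
    have hcard3 : (f2.toFinset ∪ f1.toFinset) = (f1 ++ f2).toFinset := by
      rw [List.toFinset_append, Finset.union_comm]
    have hcap : (f2.toFinset ∩ f1.toFinset).card = (f1.toFinset ∩ f2.toFinset).card := by
      rw [Finset.inter_comm]
    have hcard3' : (f2.toFinset ∪ f1.toFinset).card = (f1 ++ f2).toFinset.card := by
      rw [hcard3]
    -- arithmetic
    have hm : Bs.length = Bs1.length + Bs2.length := by
      rw [← happ, List.length_append]
    obtain ⟨k1, hk1⟩ : ∃ k1, Bs1.length = k1 + 1 := ⟨Bs1.length - 1, by omega⟩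
    obtain ⟨k2, hk2⟩ : ∃ k2, Bs2.length = k2 + 1 := ⟨Bs2.length - 1, by
      have : 1 ≤ Bs2.length := by omega
      omega⟩
    have hexp : (t+1) * (Bs.length - 1) = t*k1 + t*k2 + t + k1 + k2 + 1 := by
      have : Bs.length - 1 = k1 + k2 + 1 := by omega
      rw [this]; ring
    have ht1 : t * (Bs1.length - 1) = t * k1 := by rw [hk1]; simp
    have ht2 : t * (Bs2.length - 1) = t * k2 := by rw [hk2]; simp
    rw [List.length_append, hexp]
    rw [hc1, ht1] at hloc1; rw [hc2] at hst1; rw [hc3, ht2] at hloc2; rw [hc4, hcap] at hen2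
    omega

lemma toFinset_dedup' (l : List ℕ) : l.dedup.toFinset = l.toFinset := by
  ext x; simp [List.mem_dedup]

lemma length_filter_split4 (l : List ℕ) (f g : ℕ → Bool) :
    l.length = (l.filter (fun x => f x && g x)).length + (l.filter (fun x => f x && !g x)).length
      + (l.filter (fun x => !f x && g x)).length + (l.filter (fun x => !f x && !g x)).length := by
  induction l with
  | nil => simp
  | cons a l ih => cases hf : f a <;> cases hg : g a <;> simp [List.filter_cons, hf, hg] <;> omega

set_option maxHeartbeats 2000000 in
lemma key_aux (p q W : ℕ)
    (H1 : ∀ Cs : List (List ℕ), NodupBlocks Cs → DS3 Cs.flatten → Cs.length ≤ W →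
      Cs.flatten.length ≤ p * Cs.flatten.toFinset.card + q * (Cs.length - 1)) :
    ∀ N : ℕ, ∀ Bs : List (List ℕ), ∀ Pre : List ℕ, 1 ≤ W → Bs.length ≤ N → NodupBlocks Bs →
    DS3 (Pre ++ Bs.flatten) →
    ∃ (m' : ℕ) (Gs : List (List ℕ)) (Loc Glob St En : Finset ℕ),
      m' ≤ Bs.length ∧ Bs.length ≤ m' * W ∧ m' * W < Bs.length + W ∧
      Gs.length ≤ m' ∧ NodupBlocks Gs ∧ Gs.flatten <+ Bs.flatten ∧
      Gs.flatten.toFinset ⊆ Glob ∧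
      (Loc ∪ Glob) ⊆ Bs.flatten.toFinset ∧
      Disjoint Loc Glob ∧ St ⊆ Glob ∧ En ⊆ Glob ∧
      Disjoint Loc Pre.toFinset ∧ Disjoint St Pre.toFinset ∧
      Bs.flatten.length ≤ p * Loc.card + St.card + En.card + Gs.flatten.length +
        q * (Bs.length - m') + 3 * Bs.length := by
  intro N
  induction N with
  | zero =>
    intro Bs Pre hW hN hnd hds
    have : Bs = [] := List.length_eq_zero_iff.1 (by omega)
    subst this
    exact ⟨0, [], ∅, ∅, ∅, ∅, by simp [NodupBlocks]; omega⟩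
  | succ N ih =>
    intro Bs Pre hW hN hnd hds
    rcases Nat.eq_zero_or_pos Bs.length with hBlen | hBlen
    · have : Bs = [] := List.length_eq_zero_iff.1 hBlen
      subst this
      exact ⟨0, [], ∅, ∅, ∅, ∅, by simp [NodupBlocks]; omega⟩
    -- split off the first interval of W blocks
    set I := Bs.take W with hI
    set Rest := Bs.drop W with hRest
    set seq := I.flatten with hseq
    set PostF := Rest.flatten with hPostF
    have hmI : I.length = min W Bs.length := by rw [hI, List.length_take]
    have hmI1 : 1 ≤ I.length := by omega
    have hmIW : I.length ≤ W := by omega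
    have hRestLen : Rest.length = Bs.length - W := by rw [hRest, List.length_drop]
    have hBsf : Bs.flatten = seq ++ PostF := by
      rw [hseq, hPostF, hI, hRest, ← List.flatten_append, List.take_append_drop]
    have hndI : NodupBlocks I := fun B hB => hnd B (List.mem_of_mem_take hB)
    have hndR : NodupBlocks Rest := fun B hB => hnd B (List.mem_of_mem_drop hB)
    have hds' : DS3 ((Pre ++ seq) ++ Rest.flatten) := by
      rw [← hPostF, List.append_assoc, ← hBsf]; exact hds
    obtain ⟨m'r, Gs', Loc', Glob', St', En', G1, G2, G3, G4, G5, G6, G7, G8, G9, G10, G11,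
      G12, G13, G14⟩ := ih Rest (Pre ++ seq) hW (by omega) hndR hds'
    -- predicates
    set pPre : ℕ → Bool := fun x => decide (x ∈ Pre) with hpPre
    set pPost : ℕ → Bool := fun x => decide (x ∈ PostF) with hpPost
    set midP : ℕ → Bool := fun x => pPre x && pPost x with hmidP
    set enP : ℕ → Bool := fun x => pPre x && !pPost x with henP
    set stP : ℕ → Bool := fun x => !pPre x && pPost x with hstP
    set locP : ℕ → Bool := fun x => !pPre x && !pPost x with hlocP
    set globP : ℕ → Bool := fun x => pPre x || pPost x with hglobP
    have hsplit : seq.length = (seq.filter midP).length + (seq.filter enP).length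
        + (seq.filter stP).length + (seq.filter locP).length :=
      length_filter_split4 seq pPre pPost
    -- sublist facts
    have hseqsub : seq <+ Bs.flatten := by rw [hBsf]; exact List.sublist_append_left _ _
    have hPostsub : PostF <+ Bs.flatten := by rw [hBsf]; exact List.sublist_append_right _ _
    -- LOCAL part
    have hloc : (seq.filter locP).length ≤
        p * (seq.filter locP).toFinset.card + q * (I.length - 1) := by
      have h1 := H1 (I.map (List.filter locP)) (nodupBlocks_map_filter hndI _)
        (by
          rw [flatten_map_filter, ← hseq]
          exact ds3_sublist hds ((seq.filter_sublist.trans hseqsub).trans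
            (List.sublist_append_right _ _)))
        (by rw [List.length_map]; exact hmIW)
      rw [flatten_map_filter, List.length_map, ← hseq] at h1
      exact h1
    -- STARTER part
    have hst : (seq.filter stP).length ≤ 2 * (seq.filter stP).toFinset.card + I.length := by
      have h1 := l2_bound (I.map (List.filter stP)) (nodupBlocks_map_filter hndI _) ?_
      · rw [flatten_map_filter, List.length_map, ← hseq] at h1
        exact h1
      rw [flatten_map_filter, ← hseq]
      intro a b hab hsub
      have ha : a ∈ seq.filter stP := hsub.subset (by simp)
      have haPost : a ∈ PostF := by
        have := (List.mem_filter.1 ha).2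
        rw [hstP] at this
        simp [hpPost] at this
        exact this.2
      refine hds a b hab ?_
      have h2 : [a,b,a,b] ++ [a] <+ seq ++ PostF :=
        Sublist.append (hsub.trans (seq.filter_sublist)) (singleton_sublist.2 haPost)
      rw [← hBsf] at h2
      simpa using h2.trans (List.sublist_append_right Pre _)
    -- ENDER part
    have hen : (seq.filter enP).length ≤ 2 * (seq.filter enP).toFinset.card + I.length := by
      have h1 := l2_bound (I.map (List.filter enP)) (nodupBlocks_map_filter hndI _) ?_
      · rw [flatten_map_filter, List.length_map, ← hseq] at h1
        exact h1
      rw [flatten_map_filter, ← hseq]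
      intro a b hab hsub
      have hb : b ∈ seq.filter enP := hsub.subset (by simp)
      have hbPre : b ∈ Pre := by
        have := (List.mem_filter.1 hb).2
        rw [henP] at this
        simp [hpPre] at this
        exact this.1
      refine hds b a (Ne.symm hab) ?_
      have h2 : [b] ++ [a,b,a,b] <+ Pre ++ Bs.flatten :=
        Sublist.append (singleton_sublist.2 hbPre)
          ((hsub.trans (seq.filter_sublist)).trans hseqsub)
      simpa using h2
    -- MIDDLE part
    have hmid : (seq.filter midP).length ≤ (seq.filter midP).toFinset.card + I.length := by
      have h1 := l1_bound (I.map (List.filter midP)) (nodupBlocks_map_filter hndI _) ?_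
      · rw [flatten_map_filter, List.length_map, ← hseq] at h1
        exact h1
      rw [flatten_map_filter, ← hseq]
      intro a b hab hsub
      have hb : b ∈ seq.filter midP := hsub.subset (by simp)
      have hbmid := (List.mem_filter.1 hb).2
      rw [hmidP] at hbmid
      simp [hpPre, hpPost] at hbmid
      refine hds b a (Ne.symm hab) ?_
      have h2 : [b] ++ ([a,b,a] ++ [b]) <+ Pre ++ (seq ++ PostF) :=
        Sublist.append (singleton_sublist.2 hbmid.1)
          (Sublist.append (hsub.trans (seq.filter_sublist)) (singleton_sublist.2 hbmid.2))
      rw [← hBsf] at h2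
      simpa using h2
    -- contracted block
    set Ghat := (seq.filter globP).dedup with hGhat
    have hGhatnd : Ghat.Nodup := List.nodup_dedup _
    have hGhatsub : Ghat <+ seq := (List.dedup_sublist _).trans (seq.filter_sublist)
    have hGhatlen : Ghat.length = (seq.filter globP).toFinset.card := by
      rw [hGhat, List.card_toFinset]
    have hGhatFin : Ghat.toFinset = (seq.filter globP).toFinset := toFinset_dedup' _
    -- class finsets
    set MidI := (seq.filter midP).toFinset with hMidI
    set EnI := (seq.filter enP).toFinset with hEnI
    set StI := (seq.filter stP).toFinset with hStI
    set LocI := (seq.filter locP).toFinset with hLocI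
    set GlobI := (seq.filter globP).toFinset with hGlobI
    have memMidI : ∀ x, x ∈ MidI ↔ x ∈ seq ∧ x ∈ Pre ∧ x ∈ PostF := by
      intro x; rw [hMidI, hmidP]; simp [List.mem_filter, hpPre, hpPost]
    have memEnI : ∀ x, x ∈ EnI ↔ x ∈ seq ∧ x ∈ Pre ∧ x ∉ PostF := by
      intro x; rw [hEnI, henP]; simp [List.mem_filter, hpPre, hpPost]
    have memStI : ∀ x, x ∈ StI ↔ x ∈ seq ∧ x ∉ Pre ∧ x ∈ PostF := by
      intro x; rw [hStI, hstP]; simp [List.mem_filter, hpPre, hpPost]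
    have memLocI : ∀ x, x ∈ LocI ↔ x ∈ seq ∧ x ∉ Pre ∧ x ∉ PostF := by
      intro x; rw [hLocI, hlocP]; simp [List.mem_filter, hpPre, hpPost]
    have memGlobI : ∀ x, x ∈ GlobI ↔ x ∈ seq ∧ (x ∈ Pre ∨ x ∈ PostF) := by
      intro x; rw [hGlobI, hglobP]; simp [List.mem_filter, hpPre, hpPost]
    have hGlobIcard : GlobI.card = StI.card + EnI.card + MidI.card := by
      have hdisj1 : Disjoint StI EnI := by
        rw [Finset.disjoint_left]; intro x hx hy
        rw [memStI] at hx; rw [memEnI] at hy; tauto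
      have hdisj2 : Disjoint (StI ∪ EnI) MidI := by
        rw [Finset.disjoint_left]; intro x hx hy
        rw [Finset.mem_union, memStI, memEnI] at hx; rw [memMidI] at hy; tauto
      have hunion : GlobI = (StI ∪ EnI) ∪ MidI := by
        ext x
        rw [Finset.mem_union, Finset.mem_union, memGlobI, memStI, memEnI, memMidI]
        by_cases h1 : x ∈ Pre <;> by_cases h2 : x ∈ PostF <;> tauto
      rw [hunion, Finset.card_union_of_disjoint hdisj2, Finset.card_union_of_disjoint hdisj1]
    -- membership helpers from recursion
    have hLoc'sub : Loc' ⊆ PostF.toFinset := by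
      intro x hx
      have := G8 (Finset.mem_union_left _ hx)
      rwa [← hPostF] at this
    have hGlob'sub : Glob' ⊆ PostF.toFinset := by
      intro x hx
      have := G8 (Finset.mem_union_right _ hx)
      rwa [← hPostF] at this
    have hPre'Fin : (Pre ++ seq).toFinset = Pre.toFinset ∪ seq.toFinset := List.toFinset_append
    -- assemble
    refine ⟨m'r + 1, Ghat :: Gs', LocI ∪ Loc', GlobI ∪ Glob', StI ∪ St', EnI ∪ En',
      ?_, ?_, ?_, ?_, ?_, ?_, ?_, ?_, ?_, ?_, ?_, ?_, ?_, ?_⟩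
    · -- m' ≤ Bs.length
      omega
    · -- Bs.length ≤ m' W
      have hexp : (m'r + 1) * W = m'r * W + W := by ring
      omega
    · -- m' W < Bs.length + W
      have hexp : (m'r + 1) * W = m'r * W + W := by ring
      rcases le_or_gt W Bs.length with hcase | hcase
      · omega
      · have hm0 : m'r = 0 := by omega
        rw [hm0]
        omega
    · simp [List.length_cons]; omega
    · intro B hB
      rcases List.mem_cons.1 hB with rfl | hB
      · exact hGhatnd
      · exact G5 B hB
    · rw [List.flatten_cons, hBsf]
      exact Sublist.append hGhatsub G6
    · rw [List.flatten_cons, List.toFinset_append]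
      apply Finset.union_subset
      · rw [hGhatFin]
        exact fun x hx => Finset.mem_union_left _ hx
      · exact fun x hx => Finset.mem_union_right _ (G7 hx)
    · -- Loc ∪ Glob ⊆ symbols
      rw [hBsf]
      intro x hx
      rw [List.toFinset_append, Finset.mem_union]
      simp only [Finset.mem_union] at hx
      rcases hx with (hx | hx) | (hx | hx)
      · exact Or.inl (List.mem_toFinset.2 ((memLocI x).1 hx).1)
      · exact Or.inr (hLoc'sub hx)
      · exact Or.inl (List.mem_toFinset.2 ((memGlobI x).1 hx).1)
      · exact Or.inr (hGlob'sub hx)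
    · -- Disjoint Loc Glob
      rw [Finset.disjoint_left]
      intro x hx hy
      simp only [Finset.mem_union] at hx hy
      rcases hx with hx | hx
      · rw [memLocI] at hx
        rcases hy with hy | hy
        · rw [memGlobI] at hy; tauto
        · exact hx.2.2 (List.mem_toFinset.1 (hGlob'sub hy))
      · rcases hy with hy | hy
        · have hx' := Finset.disjoint_left.1 G12 hx
          rw [hPre'Fin] at hx'
          exact hx' (Finset.mem_union_right _ (List.mem_toFinset.2 ((memGlobI x).1 hy).1))
        · exact Finset.disjoint_left.1 G9 hx hy
    · -- St ⊆ Glob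
      apply Finset.union_subset
      · intro x hx
        apply Finset.mem_union_left
        rw [memStI] at hx; rw [memGlobI]; tauto
      · exact fun x hx => Finset.mem_union_right _ (G10 hx)
    · -- En ⊆ Glob
      apply Finset.union_subset
      · intro x hx
        apply Finset.mem_union_left
        rw [memEnI] at hx; rw [memGlobI]; tauto
      · exact fun x hx => Finset.mem_union_right _ (G11 hx)
    · -- Disjoint Loc Pre
      rw [Finset.disjoint_left]
      intro x hx hy
      simp only [Finset.mem_union] at hx
      rcases hx with hx | hx
      · rw [memLocI] at hx; exact hx.2.1 (List.mem_toFinset.1 hy)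
      · have hx' := Finset.disjoint_left.1 G12 hx
        rw [hPre'Fin] at hx'
        exact hx' (Finset.mem_union_left _ hy)
    · -- Disjoint St Pre
      rw [Finset.disjoint_left]
      intro x hx hy
      simp only [Finset.mem_union] at hx
      rcases hx with hx | hx
      · rw [memStI] at hx; exact hx.2.1 (List.mem_toFinset.1 hy)
      · have hx' := Finset.disjoint_left.1 G13 hx
        rw [hPre'Fin] at hx'
        exact hx' (Finset.mem_union_left _ hy)
    · -- the main inequality
      -- card equalities
      have hLocCard : (LocI ∪ Loc').card = LocI.card + Loc'.card := by
        apply Finset.card_union_of_disjoint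
        rw [Finset.disjoint_left]
        intro x hx hy
        rw [memLocI] at hx
        exact hx.2.2 (List.mem_toFinset.1 (hLoc'sub hy))
      have hStCard : (StI ∪ St').card = StI.card + St'.card := by
        apply Finset.card_union_of_disjoint
        rw [Finset.disjoint_left]
        intro x hx hy
        have hx' := Finset.disjoint_left.1 G13 hy
        rw [hPre'Fin] at hx'
        exact hx' (Finset.mem_union_right _ (List.mem_toFinset.2 ((memStI x).1 hx).1))
      have hEnCard : (EnI ∪ En').card = EnI.card + En'.card := by
        apply Finset.card_union_of_disjoint
        rw [Finset.disjoint_left]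
        intro x hx hy
        rw [memEnI] at hx
        exact hx.2.2 (List.mem_toFinset.1 (hGlob'sub (G11 hy)))
      have hflatlen : Bs.flatten.length = seq.length + PostF.length := by
        rw [hBsf, List.length_append]
      have hGsflatlen : (Ghat :: Gs').flatten.length = Ghat.length + Gs'.flatten.length := by
        rw [List.flatten_cons, List.length_append]
      have hqsum : q * (Bs.length - (m'r + 1)) = q * (I.length - 1) + q * (Rest.length - m'r) := by
        rw [← Nat.mul_add]
        congr 1
        have : I.length + Rest.length = Bs.length := by omega
        omega
      have hmul1 : p * (LocI ∪ Loc').card = p * LocI.card + p * Loc'.card := by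
        rw [hLocCard, Nat.mul_add]
      have hIR : I.length + Rest.length = Bs.length := by omega
      rw [← hPostF] at G14
      rw [hflatlen, hGsflatlen, hqsum, hmul1, hStCard, hEnCard, hGhatlen]
      omega

lemma key (p q r s W : ℕ) (hW : 1 ≤ W) (hrp : r + 2 ≤ p) (Bs : List (List ℕ))
    (hnd : NodupBlocks Bs) (hds : DS3 Bs.flatten)
    (H1 : ∀ Cs : List (List ℕ), NodupBlocks Cs → DS3 Cs.flatten → Cs.length ≤ W →
      Cs.flatten.length ≤ p * Cs.flatten.toFinset.card + q * (Cs.length - 1))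
    (H2 : ∀ Cs : List (List ℕ), NodupBlocks Cs → DS3 Cs.flatten →
      Cs.length * W < Bs.length + W →
      Cs.flatten.length ≤ r * Cs.flatten.toFinset.card + s * (Cs.length - 1)) :
    ∃ m', m' ≤ Bs.length ∧ Bs.length ≤ m' * W ∧ m' * W < Bs.length + W ∧
      Bs.flatten.length ≤ p * Bs.flatten.toFinset.card + q * (Bs.length - m') +
        s * (m' - 1) + 3 * Bs.length := by
  obtain ⟨m', Gs, Loc, Glob, St, En, F1, F2, F3, F4, F5, F6, F7, F8, F9, F10, F11, F12, F13, F14⟩ :=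
    key_aux p q W H1 Bs.length Bs [] hW le_rfl hnd (by simpa using hds)
  refine ⟨m', F1, F2, F3, ?_⟩
  have hGs : Gs.flatten.length ≤ r * Gs.flatten.toFinset.card + s * (Gs.length - 1) := by
    apply H2 Gs F5 (ds3_sublist hds F6)
    calc Gs.length * W ≤ m' * W := Nat.mul_le_mul_right _ F4
      _ < Bs.length + W := F3
  have h1 : r * Gs.flatten.toFinset.card ≤ r * Glob.card :=
    Nat.mul_le_mul_left _ (Finset.card_le_card F7)
  have h2 : s * (Gs.length - 1) ≤ s * (m' - 1) :=
    Nat.mul_le_mul_left _ (by omega)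
  have h3 : St.card ≤ Glob.card := Finset.card_le_card F10
  have h4 : En.card ≤ Glob.card := Finset.card_le_card F11
  have h5 : Loc.card + Glob.card ≤ Bs.flatten.toFinset.card := by
    rw [← Finset.card_union_of_disjoint F9]
    exact Finset.card_le_card F8
  have h6 : p * (Loc.card + Glob.card) ≤ p * Bs.flatten.toFinset.card :=
    Nat.mul_le_mul_left _ h5
  have h7 : p * (Loc.card + Glob.card) = p * Loc.card + p * Glob.card := Nat.mul_add _ _ _
  have h8 : (r + 2) * Glob.card ≤ p * Glob.card := Nat.mul_le_mul_right _ hrp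
  have h9 : (r + 2) * Glob.card = r * Glob.card + 2 * Glob.card := Nat.add_mul _ _ _
  omega

lemma ackDS_one (j : ℕ) : ackDS 1 j = 2 ^ j := by rw [ackDS]

lemma ackDS_base (i : ℕ) : ackDS (i+2) 1 = 2 := by rw [ackDS]

lemma ackDS_rec (i j : ℕ) : ackDS (i+2) (j+2) =
    ackDS (i+2) (j+1) * ackDS (i+1) (ackDS (i+2) (j+1)) := by rw [ackDS]

lemma two_le_ackDS : ∀ i j, 1 ≤ i → 1 ≤ j → 2 ≤ ackDS i j
  | 0, _, h, _ => absurd h (by omega)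
  | 1, j, _, hj => by
    rw [ackDS_one]
    calc 2 = 2 ^ 1 := by norm_num
      _ ≤ 2 ^ j := Nat.pow_le_pow_right (by omega) hj
  | (_+2), 0, _, h => absurd h (by omega)
  | (i+2), 1, _, _ => by rw [ackDS_base]
  | (i+2), (j+2), _, _ => by
    have hw := two_le_ackDS (i+2) (j+1) (by omega) (by omega)
    have ha := two_le_ackDS (i+1) (ackDS (i+2) (j+1)) (by omega) (by omega)
    rw [ackDS_rec]
    calc 2 ≤ ackDS (i+2) (j+1) := hw
      _ = ackDS (i+2) (j+1) * 1 := by ring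
      _ ≤ _ := Nat.mul_le_mul_left _ (by omega)
  termination_by i j => (i, j)

set_option maxHeartbeats 1000000 in
lemma mainB_step (i c : ℕ) (hi : 1 ≤ i) (hc : 1 ≤ c)
    (OH : ∀ j', 1 ≤ j' → ∀ Bs : List (List ℕ), NodupBlocks Bs → DS3 Bs.flatten →
      Bs.length ≤ (ackDS i j')^c →
      Bs.flatten.length ≤ (2*i+2) * Bs.flatten.toFinset.card + (3*i-2)*c*j'*(Bs.length - 1)) :
    ∀ j, 1 ≤ j → ∀ Bs : List (List ℕ), NodupBlocks Bs → DS3 Bs.flatten →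
      Bs.length ≤ (ackDS (i+1) j)^c →
      Bs.flatten.length ≤ (2*(i+1)+2) * Bs.flatten.toFinset.card +
        (3*(i+1)-2)*c*j*(Bs.length - 1) := by
  intro j
  induction j with
  | zero => intro h; exact absurd h (by omega)
  | succ j ihj =>
    intro _ Bs hnd hds hlen
    rcases Nat.eq_zero_or_pos j with rfl | hj
    · -- j = 1 : base case via mainA with t := c
      obtain ⟨i', rfl⟩ : ∃ i', i = i' + 1 := ⟨i - 1, by omega⟩
      have hbase : ackDS (i' + 1 + 1) (0 + 1) = 2 := ackDS_base i'
      rw [hbase] at hlen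
      have hA := mainA c Bs hnd hds hlen
      have h1 : 4 * Bs.flatten.toFinset.card ≤
          (2*(i'+1+1)+2) * Bs.flatten.toFinset.card :=
        Nat.mul_le_mul_right _ (by omega)
      have h2 : c * (Bs.length - 1) ≤
          ((3*(i'+1+1)-2)*c*(0+1)) * (Bs.length - 1) := by
        apply Nat.mul_le_mul_right
        have e : (3*(i'+1+1)-2)*c*(0+1) = (3*(i'+1+1)-2)*c := by omega
        rw [e]
        calc c = 1 * c := by omega
          _ ≤ (3*(i'+1+1)-2) * c := Nat.mul_le_mul_right _ (by omega)
      omega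
    · -- j ≥ 1 : recursive case
      obtain ⟨i', rfl⟩ : ∃ i', i = i' + 1 := ⟨i - 1, by omega⟩
      obtain ⟨j', rfl⟩ : ∃ j', j = j' + 1 := ⟨j - 1, by omega⟩
      set A := 3*(i'+1+1)-2 with hAdef
      set B := 3*(i'+1)-2 with hBdef
      have hA4 : 4 ≤ A := by omega
      have hAB : B + 3 = A := by omega
      set w := ackDS (i'+1+1) (j'+1) with hwdef
      have hw2 : 2 ≤ w := two_le_ackDS _ _ (by omega) (by omega)
      set W := w ^ c with hWdef
      have hwW : w ≤ W := by
        rw [hWdef]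
        exact Nat.le_self_pow (by omega) w
      have hW1 : 1 ≤ W := by omega
      have hrec : ackDS (i'+1+1) (j'+1+1) = w * ackDS (i'+1) w := ackDS_rec i' j'
      by_cases hsmall : Bs.length ≤ W
      · -- all blocks fit into one interval: inner IH directly
        have h1 := ihj (by omega) Bs hnd hds hsmall
        have h2 : A*c*(j'+1)*(Bs.length-1) ≤ A*c*(j'+1+1)*(Bs.length-1) :=
          Nat.mul_le_mul_right _ (Nat.mul_le_mul_left _ (by omega))
        omega
      push_neg at hsmall
      -- the key decomposition
      have H2 : ∀ Cs : List (List ℕ), NodupBlocks Cs → DS3 Cs.flatten →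
          Cs.length * W < Bs.length + W →
          Cs.flatten.length ≤ (2*(i'+1)+2) * Cs.flatten.toFinset.card +
            (B*c*w) * (Cs.length - 1) := by
        intro Cs hnd' hds' hlt
        have hlen' : Bs.length ≤ W * (ackDS (i'+1) w) ^ c := by
          rw [hrec, mul_pow] at hlen
          exact hlen
        have hCs : Cs.length ≤ (ackDS (i'+1) w) ^ c := by
          by_contra hcon
          push_neg at hcon
          have h5 : ((ackDS (i'+1) w) ^ c + 1) * W ≤ Cs.length * W :=
            Nat.mul_le_mul_right _ (by omega)
          have h6 : ((ackDS (i'+1) w) ^ c + 1) * W = W * (ackDS (i'+1) w) ^ c + W := by ring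
          omega
        have := OH w (by omega) Cs hnd' hds' hCs
        calc Cs.flatten.length ≤ (2*(i'+1)+2) * Cs.flatten.toFinset.card +
              B*c*w*(Cs.length - 1) := this
          _ = _ := by ring_nf
      obtain ⟨m', K1, K2, K3, K4⟩ := key (2*(i'+1+1)+2) (A*c*(j'+1)) (2*(i'+1)+2) (B*c*w) W
        hW1 (by omega) Bs hnd hds
        (fun Cs h1 h2 h3 => ihj (by omega) Cs h1 h2 h3)
        H2
      -- now the arithmetic
      have hm3 : 3 ≤ Bs.length := by omega
      have hm'2 : 2 ≤ m' := by
        by_contra hcon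
        push_neg at hcon
        have : m' * W ≤ 1 * W := Nat.mul_le_mul_right _ (by omega)
        omega
      obtain ⟨K, hK⟩ : ∃ K, Bs.length = K + 3 := ⟨Bs.length - 3, by omega⟩
      have hsub1 : Bs.length - 1 = K + 2 := by omega
      have hsub2 : Bs.length - m' ≤ K + 1 := by omega
      -- w * (m' - 1) ≤ Bs.length - 1
      have hwm : w * (m' - 1) ≤ K + 2 := by
        have e : (m' - 1 + 1) * W = (m' - 1) * W + W := by ring
        rw [show m' - 1 + 1 = m' by omega] at e
        have h7 : (m' - 1) * W < Bs.length := by omega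
        have h8 : w * (m' - 1) ≤ (m' - 1) * W := by
          calc w * (m' - 1) = (m' - 1) * w := by ring
            _ ≤ (m' - 1) * W := Nat.mul_le_mul_left _ hwW
        omega
      have hq : (A*c*(j'+1)) * (Bs.length - m') ≤ (A*c*(j'+1)) * (K+1) :=
        Nat.mul_le_mul_left _ hsub2
      have hs : (B*c*w) * (m' - 1) ≤ B*c*(K+2) := by
        calc (B*c*w) * (m' - 1) = B*c*(w*(m'-1)) := by ring
          _ ≤ B*c*(K+2) := Nat.mul_le_mul_left _ hwm
      have e1 : A*c*(j'+1+1)*(K+2) = A*c*(j'+1)*(K+1) + A*c*(j'+1) + A*c*(K+2) := by ring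
      have e2 : A*c*(K+2) = B*c*(K+2) + 3*c*(K+2) := by rw [← hAB]; ring
      have e3 : 3*(K+2) ≤ 3*c*(K+2) := Nat.mul_le_mul_right _ (by omega)
      have e4 : 4 ≤ A*c*(j'+1) := by
        calc 4 = 4*1*1 := by ring
          _ ≤ A*c*(j'+1) := Nat.mul_le_mul (Nat.mul_le_mul hA4 hc) (by omega)
      rw [hsub1]
      omega

lemma mainB : ∀ i, 1 ≤ i → ∀ c, 1 ≤ c → ∀ j, 1 ≤ j → ∀ Bs : List (List ℕ),
    NodupBlocks Bs → DS3 Bs.flatten → Bs.length ≤ (ackDS i j) ^ c →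
    Bs.flatten.length ≤ (2*i+2) * Bs.flatten.toFinset.card + (3*i-2)*c*j*(Bs.length - 1) := by
  intro i
  induction i with
  | zero => intro h; exact absurd h (by omega)
  | succ i ihi =>
    intro _ c hc
    rcases Nat.eq_zero_or_pos i with rfl | hi
    · -- i = 1
      intro j hj Bs hnd hds hlen
      have h2 : ackDS (0+1) j = 2 ^ j := ackDS_one j
      rw [h2, ← pow_mul] at hlen
      have hA := mainA (j * c) Bs hnd hds hlen
      have e1 : (j * c) * (Bs.length - 1) = ((3*(0+1)-2)*c*j) * (Bs.length - 1) := by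
        have : (3*(0+1)-2)*c*j = j * c := by norm_num; ring
        rw [this]
      omega
    · exact mainB_step i c hi hc (fun j' hj' => ihi hi c hc j' hj')


/-- For every `c, i, j, n ≥ 1` and `1 ≤ m ≤ (a_{i,j})^c`:
`λ₃(n,m) ≤ (2i+2)·n + (3i−2)·c·j·(m−1)`. -/
theorem stmt11 (c i j n m : ℕ) (hc : 1 ≤ c) (hi : 1 ≤ i) (hj : 1 ≤ j)
    (hn : 1 ≤ n) (hm1 : 1 ≤ m) (hm2 : m ≤ ackDS i j ^ c) :
    lamB 3 n m ≤ (2 * i + 2) * n + (3 * i - 2) * c * j * (m - 1) := by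
  apply csSup_le
  · -- nonempty: the empty sequence
    refine ⟨0, [], ?_, by simp, ⟨[], by simp, by simp, by simp⟩, rfl⟩
    intro a b hab hsub
    have := List.sublist_nil.1 hsub
    simp [altList] at this
  · rintro l ⟨S, hDS, hcard, ⟨Bs, hBslen, hBsnd, rfl⟩, rfl⟩
    have hds3 : DS3 Bs.flatten := fun a b hab => hDS a b hab
    have hmain := mainB i hi c hc j hj Bs hBsnd hds3 (le_trans hBslen hm2)
    have h1 : (2*i+2) * Bs.flatten.toFinset.card ≤ (2*i+2) * n :=
      Nat.mul_le_mul_left _ hcard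
    have h2 : (3*i-2)*c*j*(Bs.length - 1) ≤ (3*i-2)*c*j*(m-1) :=
      Nat.mul_le_mul_left _ (by omega)
    calc Bs.flatten.length ≤ _ := hmain
      _ ≤ (2*i+2) * n + (3*i-2)*c*j*(m-1) := by omega
      _ = (2 * i + 2) * n + (3 * i - 2) * c * j * (m - 1) := by ring_nf
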